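/- The function r is monotone increasing on (0, π/4): for all α₁, α₂ with 0 < α₁ ≤ α₂ < π/4 one has r(α₁) ≤ r(α₂). -/

import Mathlib

open Real

/-- `r(α) = sin α / sin((2·⌊π/(4α)⌋ + 1)·α)`: the ratio `|CC'|/|BB'|` in the
construction of a zero-resistance body of revolution from two isosceles trapezia
with base angle `π/2 − α`. -/
noncomputable def rRatio (α : ℝ) : ℝ :=
  Real.sin α / Real.sin (((2 * ⌊π / (4 * α)⌋ + 1 : ℤ) : ℝ) * α)

noncomputable def R (n : ℕ) (x : ℝ) : ℝ := Real.sin x / Real.sin ((2*(n:ℝ)+1)*x)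

lemma dirichlet (n : ℕ) (t : ℝ) :
    Real.sin ((2*(n:ℝ)+1)*t)
      = Real.sin t * (1 + 2 * ∑ k ∈ Finset.range n, Real.cos (2*((k:ℝ)+1)*t)) := by
  induction n with
  | zero => simp
  | succ n ih =>
    have h1 := Real.sin_add ((2*(n:ℝ)+2)*t) t
    have h2 := Real.sin_sub ((2*(n:ℝ)+2)*t) t
    have e1 : (2*(n:ℝ)+2)*t + t = (2*((n:ℝ)+1)+1)*t := by ring
    have e2 : (2*(n:ℝ)+2)*t - t = (2*(n:ℝ)+1)*t := by ring
    rw [e1] at h1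
    rw [e2] at h2
    rw [Finset.sum_range_succ]
    push_cast
    rw [show (2*((n:ℝ)+1)*t) = (2*(n:ℝ)+2)*t from by ring]
    linarith [h1, h2, ih]


lemma R_mono (n : ℕ) (hn : 1 ≤ n) (x y : ℝ) (hx : 0 < x) (hxy : x ≤ y)
    (hy : y ≤ π/(4*(n:ℝ))) : R n x ≤ R n y := by
  have hπ := Real.pi_pos
  have hn' : (1:ℝ) ≤ (n:ℝ) := by exact_mod_cast hn
  have hnpos : (0:ℝ) < (n:ℝ) := by linarith
  set c := π/(4*(n:ℝ)) with hcdef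
  have hc : 4*(n:ℝ)*c = π := by rw [hcdef]; field_simp
  have hcpos : 0 < c := by positivity
  have hypos : 0 < y := lt_of_lt_of_le hx hxy
  have hy4 : y < π := by nlinarith
  have hsx : 0 < Real.sin x := Real.sin_pos_of_pos_of_lt_pi hx (lt_of_le_of_lt hxy hy4)
  have hsy : 0 < Real.sin y := Real.sin_pos_of_pos_of_lt_pi hypos hy4
  have hmy : (2*(n:ℝ)+1)*y < π := by
    nlinarith [mul_nonneg (show (0:ℝ) ≤ 2*(n:ℝ)+1 by linarith) (sub_nonneg.2 hy),
      mul_pos (show (0:ℝ) < 2*(n:ℝ)-1 by linarith) hcpos]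
  have hsmy : 0 < Real.sin ((2*(n:ℝ)+1)*y) :=
    Real.sin_pos_of_pos_of_lt_pi (by positivity) hmy
  have hmxy : (2*(n:ℝ)+1)*x ≤ (2*(n:ℝ)+1)*y := by nlinarith
  have hsmx : 0 < Real.sin ((2*(n:ℝ)+1)*x) :=
    Real.sin_pos_of_pos_of_lt_pi (by positivity) (lt_of_le_of_lt hmxy hmy)
  have hD : ∑ k ∈ Finset.range n, Real.cos (2*((k:ℝ)+1)*y)
      ≤ ∑ k ∈ Finset.range n, Real.cos (2*((k:ℝ)+1)*x) := by
    apply Finset.sum_le_sum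
    intro k hk
    have hk' : (k:ℝ)+1 ≤ (n:ℝ) := by
      have := Finset.mem_range.mp hk
      exact_mod_cast Nat.succ_le_of_lt this
    apply Real.cos_le_cos_of_nonneg_of_le_pi
    · positivity
    · nlinarith [mul_le_mul_of_nonneg_right hk' hypos.le,
        mul_le_mul_of_nonneg_left hxy (show (0:ℝ) ≤ (n:ℝ) by linarith),
        mul_le_mul_of_nonneg_left (show y ≤ c from hy) hnpos.le]
    · nlinarith [mul_le_mul_of_nonneg_left hxy (show (0:ℝ) ≤ (k:ℝ)+1 by positivity)]
  unfold R
  rw [div_le_div_iff₀ hsmx hsmy]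
  rw [dirichlet n x, dirichlet n y]
  nlinarith [mul_nonneg (mul_pos hsx hsy).le (sub_nonneg.2 hD)]

lemma R_cont (n : ℕ) : R (n+1) (π/(4*((n:ℝ)+1))) = R n (π/(4*((n:ℝ)+1))) := by
  unfold R
  push_cast
  congr 1
  rw [show (2*((n:ℝ)+1)+1) * (π/(4*((n:ℝ)+1))) = π - (2*(n:ℝ)+1)*(π/(4*((n:ℝ)+1))) by
    field_simp; ring]
  exact Real.sin_pi_sub _

lemma chain (N₂ : ℕ) (hN₂ : 1 ≤ N₂) (α₂ : ℝ) (hl : π/(4*((N₂:ℝ)+1)) < α₂)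
    (hr : α₂ ≤ π/(4*(N₂:ℝ))) :
    ∀ n, N₂ ≤ n → ∀ x : ℝ, 0 < x → x ≤ π/(4*(n:ℝ)) → x ≤ α₂ → R n x ≤ R N₂ α₂ := by
  intro n hn
  induction n, hn using Nat.le_induction with
  | base => intro x hx _ hx3; exact R_mono N₂ hN₂ x α₂ hx hx3 hr
  | succ n hn ih =>
    intro x hx hx2 hx3
    have hπ := Real.pi_pos
    have hc : (0:ℝ) < π/(4*((n:ℝ)+1)) := by positivity
    have hcast : ((n+1 : ℕ) : ℝ) = (n:ℝ)+1 := by push_cast; ring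
    have hx2' : x ≤ π/(4*((n:ℝ)+1)) := by rw [hcast] at hx2; exact hx2
    have h1 : R (n+1) x ≤ R (n+1) (π/(4*((n:ℝ)+1))) := by
      apply R_mono (n+1) (by omega) x _ hx hx2'
      rw [hcast]
    rw [R_cont n] at h1
    have hn1 : (1:ℝ) ≤ (n:ℝ) := by exact_mod_cast hN₂.trans hn
    have hN2n : (N₂:ℝ) ≤ (n:ℝ) := by exact_mod_cast hn
    refine le_trans h1 (ih (π/(4*((n:ℝ)+1))) hc ?_ ?_)
    · gcongr <;> linarith
    · refine le_trans ?_ hl.le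
      gcongr <;> linarith

lemma floor_bounds (α : ℝ) (hα : 0 < α) (h4 : α < π/4) :
    ∃ N : ℕ, 1 ≤ N ∧ (⌊π/(4*α)⌋ : ℤ) = (N:ℤ) ∧ π/(4*((N:ℝ)+1)) < α ∧ α ≤ π/(4*(N:ℝ)) := by
  have hπ := Real.pi_pos
  have h4α : (0:ℝ) < 4*α := by linarith
  have h1 : (1:ℝ) ≤ π/(4*α) := by rw [le_div_iff₀ h4α]; linarith
  have hfl : (1:ℤ) ≤ ⌊π/(4*α)⌋ := Int.le_floor.mpr (by push_cast; exact h1)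
  refine ⟨(⌊π/(4*α)⌋).toNat, by omega, by omega, ?_, ?_⟩
  · have h2 : π/(4*α) < ((⌊π/(4*α)⌋).toNat : ℝ) + 1 := by
      have := Int.lt_floor_add_one (π/(4*α))
      have he : ((⌊π/(4*α)⌋.toNat : ℤ) : ℝ) = (⌊π/(4*α)⌋ : ℝ) := by
        norm_cast; omega
      push_cast at he ⊢
      linarith
    have h3 : π < ((⌊π/(4*α)⌋).toNat + 1 : ℝ) * (4*α) := by
      rw [div_lt_iff₀ h4α] at h2; linarith
    rw [div_lt_iff₀ (by positivity)]
    nlinarith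
  · have h2 : ((⌊π/(4*α)⌋).toNat : ℝ) ≤ π/(4*α) := by
      have := Int.floor_le (π/(4*α))
      have he : ((⌊π/(4*α)⌋.toNat : ℤ) : ℝ) = (⌊π/(4*α)⌋ : ℝ) := by
        norm_cast; omega
      push_cast at he ⊢
      linarith
    have hNpos : (0:ℝ) < ((⌊π/(4*α)⌋).toNat : ℝ) := by
      have : 1 ≤ (⌊π/(4*α)⌋).toNat := by omega
      exact_mod_cast this
    have h3 : ((⌊π/(4*α)⌋).toNat : ℝ) * (4*α) ≤ π := (le_div_iff₀ h4α).mp h2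
    rw [le_div_iff₀ (by positivity)]
    nlinarith


/-- The function `r` is monotone increasing on `(0, π/4)`: whenever
`0 < α₁ ≤ α₂ < π/4`, one has `r(α₁) ≤ r(α₂)`. -/
theorem rRatio_monotoneOn (α₁ α₂ : ℝ) (h₁ : 0 < α₁) (h₁₂ : α₁ ≤ α₂) (h₂ : α₂ < π / 4) :
    rRatio α₁ ≤ rRatio α₂ := by
  have hπ := Real.pi_pos
  have h₁4 : α₁ < π/4 := lt_of_le_of_lt h₁₂ h₂
  have h2pos : 0 < α₂ := lt_of_lt_of_le h₁ h₁₂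
  obtain ⟨N₁, hN₁1, hN₁eq, hN₁l, hN₁r⟩ := floor_bounds α₁ h₁ h₁4
  obtain ⟨N₂, hN₂1, hN₂eq, hN₂l, hN₂r⟩ := floor_bounds α₂ h2pos h₂
  have hr1 : rRatio α₁ = R N₁ α₁ := by
    unfold rRatio R; rw [hN₁eq]; push_cast; ring_nf
  have hr2 : rRatio α₂ = R N₂ α₂ := by
    unfold rRatio R; rw [hN₂eq]; push_cast; ring_nf
  have hN : N₂ ≤ N₁ := by
    have hmono : π/(4*α₂) ≤ π/(4*α₁) := by gcongr <;> linarith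
    have := Int.floor_le_floor hmono
    omega
  rw [hr1, hr2]
  exact chain N₂ hN₂1 α₂ hN₂l hN₂r N₁ hN α₁ h₁ hN₁r h₁₂
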